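/- Let C ⊆ ℝⁿ be a nonempty closed convex set and let F : ℝⁿ → ℝⁿ be continuous and satisfy the coerciveness condition. Let β : ℕ → ℝ be stepsizes with β_k > 0 for all k, ∑_{k=0}^∞ β_k = ∞ and ∑_{k=0}^∞ β_k² < ∞. Let (K_k)_{k∈ℕ} be nonempty closed convex subsets of ℝⁿ with C ⊆ K_k for every k, such that for every bounded set V ⊆ ℝⁿ there exists μ ∈ [0,1) with dist(P_{K_k}(x), C) ≤ μ·dist(x, C) for every k and every x ∈ V. Given x⁰ ∈ ℝⁿ, define inductively x^{k+1} = P_{K_k}(x^k − (β_k/η_k)F(x^k)), where η_k = max{1, ‖F(x^k)‖}. Then: (i) the sequences {x^k} and {F(x^k)} are bounded; (ii) dist(x^k, C) → 0 as k → ∞; (iii) ‖x^{k+1} − x^k‖ → 0 as k → ∞; and (iv) every cluster point of {x^k} belongs to C. -/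

import Mathlib

open scoped RealInnerProductSpace
open Metric Filter

private lemma proj_point_le {E : Type*} [NormedAddCommGroup E] [InnerProductSpace ℝ E]
    {K : Set E} (hK : Convex ℝ K) {p u z : E} (hp : p ∈ K)
    (hmin : ∀ y ∈ K, ‖u - p‖ ≤ ‖u - y‖) (hz : z ∈ K) : ‖p - z‖ ≤ ‖u - z‖ := by
  have hbdd : BddBelow (Set.range fun w : K => ‖u - (w : E)‖) :=
    ⟨0, fun _ ⟨_, h⟩ => h ▸ norm_nonneg _⟩
  have hinf : ‖u - p‖ = ⨅ w : K, ‖u - (w : E)‖ := by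
    haveI : Nonempty K := ⟨⟨p, hp⟩⟩
    refine le_antisymm (le_ciInf fun w => hmin w w.2) (ciInf_le hbdd ⟨p, hp⟩)
  have hvar : ⟪u - p, z - p⟫ ≤ 0 :=
    (norm_eq_iInf_iff_real_inner_le_zero hK hp).mp hinf z hz
  have hkey : ‖p - z‖ ^ 2 ≤ ⟪u - z, p - z⟫ := by
    have h1 : (p - z : E) = (u - z) - (u - p) := by abel
    have h2 : ⟪u - p, p - z⟫ = -⟪u - p, z - p⟫ := by
      rw [← inner_neg_right]; congr 1; abel
    calc ‖p - z‖ ^ 2 = ⟪p - z, p - z⟫ := (real_inner_self_eq_norm_sq _).symm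
      _ = ⟪u - z, p - z⟫ - ⟪u - p, p - z⟫ := by
          nth_rewrite 1 [h1]; rw [inner_sub_left]
      _ ≤ ⟪u - z, p - z⟫ := by rw [h2]; linarith
  have h3 : ⟪u - z, p - z⟫ ≤ ‖u - z‖ * ‖p - z‖ := real_inner_le_norm _ _
  nlinarith [norm_nonneg (p - z), norm_nonneg (u - z)]

private lemma contraction_tendsto_zero {d β : ℕ → ℝ} {μ : ℝ} (hμ0 : 0 ≤ μ) (hμ1 : μ < 1)
    (hd0 : ∀ k, 0 ≤ d k) (hβ0 : ∀ k, 0 ≤ β k) (hβ : Tendsto β atTop (nhds 0))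
    (hrec : ∀ k, d (k + 1) ≤ μ * d k + β k) : Tendsto d atTop (nhds 0) := by
  rw [Metric.tendsto_atTop]
  intro ε hε
  have hε2 : 0 < ε / 2 := by linarith
  obtain ⟨N, hN⟩ := (Metric.tendsto_atTop.mp hβ) (ε / 2 * (1 - μ)) (mul_pos hε2 (by linarith))
  have hNβ : ∀ j, N ≤ j → β j ≤ ε / 2 * (1 - μ) := by
    intro j hj
    have := hN j hj
    rw [Real.dist_eq, sub_zero, abs_of_nonneg (hβ0 j)] at this
    linarith
  have hind : ∀ m, d (N + m) ≤ μ ^ m * d N + ε / 2 := by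
    intro m
    induction m with
    | zero => simp; linarith [hε2]
    | succ m ih =>
      have h1 := hrec (N + m)
      have h2 := hNβ (N + m) (Nat.le_add_right _ _)
      have h3 : μ * d (N + m) ≤ μ * (μ ^ m * d N + ε / 2) :=
        mul_le_mul_of_nonneg_left ih hμ0
      have : d (N + (m + 1)) = d (N + m + 1) := by ring_nf
      rw [this]
      calc d (N + m + 1) ≤ μ * d (N + m) + β (N + m) := h1
        _ ≤ μ * (μ ^ m * d N + ε / 2) + ε / 2 * (1 - μ) := by linarith
        _ = μ ^ (m + 1) * d N + ε / 2 := by ring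
  have hpow : Tendsto (fun m => μ ^ m * d N) atTop (nhds 0) := by
    simpa using (tendsto_pow_atTop_nhds_zero_of_lt_one hμ0 hμ1).mul_const (d N)
  obtain ⟨M, hM⟩ := (Metric.tendsto_atTop.mp hpow) (ε / 2) hε2
  refine ⟨N + M, fun k hk => ?_⟩
  have hkN : N ≤ k := le_trans (Nat.le_add_right _ _) hk
  have hdk : d k ≤ μ ^ (k - N) * d N + ε / 2 := by
    have := hind (k - N)
    rwa [Nat.add_sub_cancel' hkN] at this
  have hMk : M ≤ k - N := by omega
  have hmono : μ ^ (k - N) ≤ μ ^ M := pow_le_pow_of_le_one hμ0 hμ1.le hMk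
  have hMlt : μ ^ M * d N < ε / 2 := by
    have := hM M le_rfl
    rw [Real.dist_eq, sub_zero] at this
    calc μ ^ M * d N ≤ |μ ^ M * d N| := le_abs_self _
      _ < ε / 2 := this
  have : μ ^ (k - N) * d N ≤ μ ^ M * d N :=
    mul_le_mul_of_nonneg_right hmono (hd0 N)
  rw [Real.dist_eq, sub_zero, abs_of_nonneg (hd0 k)]
  linarith
theorem stmt_3 {n : ℕ} (hn : 0 < n)
    (C : Set (EuclideanSpace ℝ (Fin n)))
    (hCne : C.Nonempty) (hCcl : IsClosed C) (hCcv : Convex ℝ C)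
    (F : EuclideanSpace ℝ (Fin n) → EuclideanSpace ℝ (Fin n))
    (hFcont : Continuous F)
    (hcoer : ∃ zhat ∈ C, ∃ W : Set (EuclideanSpace ℝ (Fin n)),
      Bornology.IsBounded W ∧ ∀ x ∉ W, 0 ≤ ⟪F x, x - zhat⟫)
    (β : ℕ → ℝ) (hβpos : ∀ k, 0 < β k)
    (hβdiv : Tendsto (fun N => ∑ k ∈ Finset.range N, β k) atTop atTop)
    (hβsq : Summable fun k => (β k) ^ 2)
    (K : ℕ → Set (EuclideanSpace ℝ (Fin n)))
    (hKne : ∀ k, (K k).Nonempty) (hKcl : ∀ k, IsClosed (K k))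
    (hKcv : ∀ k, Convex ℝ (K k)) (hCK : ∀ k, C ⊆ K k)
    -- `P k` is the metric projection onto `K k`: `P k x` is the point of `K k` nearest to `x`.
    (P : ℕ → EuclideanSpace ℝ (Fin n) → EuclideanSpace ℝ (Fin n))
    (hP : ∀ k x, P k x ∈ K k ∧ ∀ y ∈ K k, ‖x - P k x‖ ≤ ‖x - y‖)
    (hcontr : ∀ V : Set (EuclideanSpace ℝ (Fin n)), Bornology.IsBounded V →
      ∃ μ : ℝ, 0 ≤ μ ∧ μ < 1 ∧ ∀ k, ∀ x ∈ V, infDist (P k x) C ≤ μ * infDist x C)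
    (x : ℕ → EuclideanSpace ℝ (Fin n))
    (hx : ∀ k, x (k + 1) = P k (x k - (β k / max 1 ‖F (x k)‖) • F (x k))) :
    Bornology.IsBounded (Set.range x) ∧
      Bornology.IsBounded (Set.range fun k => F (x k)) ∧
      Tendsto (fun k => infDist (x k) C) atTop (nhds 0) ∧
      Tendsto (fun k => ‖x (k + 1) - x k‖) atTop (nhds 0) ∧
      ∀ p : EuclideanSpace ℝ (Fin n),
        (∃ φ : ℕ → ℕ, StrictMono φ ∧ Tendsto (x ∘ φ) atTop (nhds p)) → p ∈ C := by
  obtain ⟨z, hzC, W, hW, hcoW⟩ := hcoer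
  set y : ℕ → EuclideanSpace ℝ (Fin n) :=
    fun k => x k - (β k / max 1 ‖F (x k)‖) • F (x k) with hydef
  have hxy : ∀ k, x (k + 1) = P k (y k) := hx
  have hproj : ∀ k u, ∀ w ∈ K k, ‖P k u - w‖ ≤ ‖u - w‖ := fun k u w hw =>
    proj_point_le (hKcv k) (hP k u).1 (hP k u).2 hw
  have hηpos : ∀ k, (0:ℝ) < max 1 ‖F (x k)‖ := fun k =>
    lt_of_lt_of_le zero_lt_one (le_max_left _ _)
  have hs0 : ∀ k, 0 ≤ β k / max 1 ‖F (x k)‖ := fun k =>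
    div_nonneg (hβpos k).le (hηpos k).le
  have hsF : ∀ k, ‖(β k / max 1 ‖F (x k)‖) • F (x k)‖ ≤ β k := by
    intro k
    rw [norm_smul, Real.norm_eq_abs, abs_of_nonneg (hs0 k), div_mul_eq_mul_div,
      div_le_iff₀ (hηpos k)]
    exact mul_le_mul_of_nonneg_left (le_max_right _ _) (hβpos k).le
  have hystep : ∀ k, ‖y k - x k‖ ≤ β k := by
    intro k
    have : y k - x k = -((β k / max 1 ‖F (x k)‖) • F (x k)) := by
      rw [hydef]; beta_reduce; abel
    rw [this, norm_neg]; exact hsF k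
  -- bound on W
  obtain ⟨r, hr⟩ := hW.subset_closedBall z
  set ρ : ℝ := max r 0 with hρdef
  have hρW : ∀ w ∈ W, ‖w - z‖ ≤ ρ := by
    intro w hw
    have := hr hw
    rw [mem_closedBall, dist_eq_norm] at this
    exact le_trans this (le_max_left _ _)
  -- bounds from summability
  set S : ℝ := ∑' k, β k ^ 2 with hSdef
  have hterm : ∀ k, β k ^ 2 ≤ S := fun k => Summable.le_tsum hβsq k fun j _ => sq_nonneg _
  have hS0 : 0 ≤ S := le_trans (sq_nonneg _) (hterm 0)
  set B : ℝ := Real.sqrt S with hBdef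
  have hβB : ∀ k, β k ≤ B := fun k => (Real.le_sqrt (hβpos k).le hS0).mpr (hterm k)
  have hzK : ∀ k, z ∈ K k := fun k => hCK k hzC
  -- quasi-Fejér step
  have hstep : ∀ k, ‖x (k+1) - z‖^2 ≤ max (‖x k - z‖^2 + β k ^2) ((ρ + B)^2) := by
    intro k
    have hproj' : ‖x (k+1) - z‖ ≤ ‖y k - z‖ := by
      rw [hxy k]; exact hproj k (y k) z (hzK k)
    by_cases hxW : x k ∈ W
    · refine le_max_of_le_right ?_
      have h1 : ‖y k - z‖ ≤ ρ + B := by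
        calc ‖y k - z‖ = ‖(x k - z) + (y k - x k)‖ := by congr 1; abel
          _ ≤ ‖x k - z‖ + ‖y k - x k‖ := norm_add_le _ _
          _ ≤ ρ + B := add_le_add (hρW _ hxW) (le_trans (hystep k) (hβB k))
      exact pow_le_pow_left₀ (norm_nonneg _) (le_trans hproj' h1) 2
    · refine le_max_of_le_left ?_
      have hco := hcoW (x k) hxW
      have hexp : ‖y k - z‖^2 = ‖x k - z‖^2
          - 2 * ((β k / max 1 ‖F (x k)‖) * ⟪F (x k), x k - z⟫)
          + ‖(β k / max 1 ‖F (x k)‖) • F (x k)‖^2 := by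
        have h0 : y k - z = (x k - z) - (β k / max 1 ‖F (x k)‖) • F (x k) := by
          rw [hydef]; beta_reduce; abel
        rw [h0, norm_sub_sq_real, real_inner_smul_right, real_inner_comm]
      have h2 : ‖(β k / max 1 ‖F (x k)‖) • F (x k)‖^2 ≤ β k ^ 2 :=
        pow_le_pow_left₀ (norm_nonneg _) (hsF k) 2
      have h3 : 0 ≤ (β k / max 1 ‖F (x k)‖) * ⟪F (x k), x k - z⟫ :=
        mul_nonneg (hs0 k) hco
      have hsq : ‖x (k+1) - z‖^2 ≤ ‖y k - z‖^2 :=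
        pow_le_pow_left₀ (norm_nonneg _) hproj' 2
      linarith
  -- boundedness via induction
  set M : ℝ := max (‖x 0 - z‖^2) ((ρ + B)^2) with hMdef
  have hA : ∀ k, ‖x k - z‖^2 ≤ M + ∑ j ∈ Finset.range k, β j ^ 2 := by
    intro k
    induction k with
    | zero =>
      simp only [Finset.range_zero, Finset.sum_empty, add_zero]
      exact le_max_left _ _
    | succ k ih =>
      have h1 := hstep k
      rw [Finset.sum_range_succ]
      have hsum0 : 0 ≤ ∑ j ∈ Finset.range k, β j ^ 2 :=
        Finset.sum_nonneg fun j _ => sq_nonneg _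
      have hM2 : (ρ + B)^2 ≤ M := le_max_right _ _
      have hβk : (0:ℝ) ≤ β k ^ 2 := sq_nonneg _
      exact le_trans h1 (max_le (by linarith) (by linarith))
  have hSsum : ∀ k, ∑ j ∈ Finset.range k, β j ^ 2 ≤ S := fun k =>
    Summable.sum_le_tsum _ (fun j _ => sq_nonneg _) hβsq
  have hM0 : 0 ≤ M := le_trans (sq_nonneg _) (le_max_right _ _)
  set R : ℝ := Real.sqrt (M + S) with hRdef
  have hxR : ∀ k, ‖x k - z‖ ≤ R := fun k =>
    (Real.le_sqrt (norm_nonneg _) (add_nonneg hM0 hS0)).mpr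
      (le_trans (hA k) (by linarith [hSsum k]))
  have hxball : ∀ k, x k ∈ closedBall z R := by
    intro k; rw [mem_closedBall, dist_eq_norm]; exact hxR k
  have hbx : Bornology.IsBounded (Set.range x) :=
    (isBounded_closedBall).subset (Set.range_subset_iff.mpr hxball)
  have hbF : Bornology.IsBounded (Set.range fun k => F (x k)) := by
    have hcomp : IsCompact (F '' closedBall z R) := (isCompact_closedBall z R).image hFcont
    exact hcomp.isBounded.subset
      (Set.range_subset_iff.mpr fun k => Set.mem_image_of_mem F (hxball k))
  -- β tends to zero
  have hβ0' : Tendsto β atTop (nhds 0) := by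
    have h2 := hβsq.tendsto_atTop_zero
    have h3 : Tendsto (fun k => Real.sqrt (β k ^ 2)) atTop (nhds 0) := by
      have := (Real.continuous_sqrt.tendsto 0).comp h2
      simpa [Function.comp_def] using this
    exact h3.congr fun k => Real.sqrt_sq (hβpos k).le
  -- distance to C tends to zero
  have hyball : ∀ k, y k ∈ closedBall z (R + B) := by
    intro k
    rw [mem_closedBall, dist_eq_norm]
    calc ‖y k - z‖ = ‖(x k - z) + (y k - x k)‖ := by congr 1; abel
      _ ≤ ‖x k - z‖ + ‖y k - x k‖ := norm_add_le _ _
      _ ≤ R + B := add_le_add (hxR k) (le_trans (hystep k) (hβB k))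
  obtain ⟨μ, hμ0, hμ1, hμ⟩ := hcontr (closedBall z (R + B)) isBounded_closedBall
  have hyx : ∀ k, infDist (y k) C ≤ infDist (x k) C + β k := by
    intro k
    have h2 : infDist (y k) C ≤ infDist (x k) C + dist (y k) (x k) :=
      infDist_le_infDist_add_dist
    have h3 : dist (y k) (x k) ≤ β k := by rw [dist_eq_norm]; exact hystep k
    linarith
  have hdrec : ∀ k, infDist (x (k+1)) C ≤ μ * infDist (x k) C + β k := by
    intro k
    have h1 : infDist (x (k+1)) C ≤ μ * infDist (y k) C := by
      rw [hxy k]; exact hμ k (y k) (hyball k)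
    have h6 : μ * infDist (y k) C ≤ μ * (infDist (x k) C + β k) :=
      mul_le_mul_of_nonneg_left (hyx k) hμ0
    have h7 : μ * β k ≤ β k := by nlinarith [hβpos k]
    nlinarith
  have hdist0 : Tendsto (fun k => infDist (x k) C) atTop (nhds 0) :=
    contraction_tendsto_zero hμ0 hμ1 (fun _ => infDist_nonneg)
      (fun k => (hβpos k).le) hβ0' hdrec
  -- successive differences tend to zero
  have hxx : ∀ k, ‖x (k+1) - x k‖ ≤ infDist (x k) C + 2 * β k := by
    intro k
    have h1 : ‖y k - P k (y k)‖ ≤ infDist (y k) C := by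
      by_contra h
      push_neg at h
      obtain ⟨c, hc, hlt⟩ := (infDist_lt_iff hCne).mp h
      have h5 := (hP k (y k)).2 c (hCK k hc)
      rw [dist_eq_norm] at hlt
      linarith
    have hy2 := hyx k
    calc ‖x (k+1) - x k‖ = ‖(P k (y k) - y k) + (y k - x k)‖ := by
          rw [hxy k]; congr 1; abel
      _ ≤ ‖P k (y k) - y k‖ + ‖y k - x k‖ := norm_add_le _ _
      _ = ‖y k - P k (y k)‖ + ‖y k - x k‖ := by rw [norm_sub_rev]
      _ ≤ infDist (y k) C + β k := add_le_add h1 (hystep k)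
      _ ≤ infDist (x k) C + 2 * β k := by linarith
  have hiii : Tendsto (fun k => ‖x (k+1) - x k‖) atTop (nhds 0) := by
    have hlim : Tendsto (fun k => infDist (x k) C + 2 * β k) atTop (nhds 0) := by
      simpa using hdist0.add (hβ0'.const_mul 2)
    exact squeeze_zero (fun k => norm_nonneg _) hxx hlim
  refine ⟨hbx, hbF, hdist0, hiii, ?_⟩
  rintro p ⟨φ, hφ, hφt⟩
  have h1 : Tendsto (fun k => infDist ((x ∘ φ) k) C) atTop (nhds (infDist p C)) :=
    ((continuous_infDist_pt C).tendsto p).comp hφt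
  have h2 : Tendsto (fun k => infDist (x (φ k)) C) atTop (nhds 0) :=
    hdist0.comp hφ.tendsto_atTop
  have h0 : infDist p C = 0 := tendsto_nhds_unique h1 h2
  exact (hCcl.mem_iff_infDist_zero hCne).mpr h0
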